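/- For the square lattice Z^2 with steps (±1,0),(0,±1), the number of 2n-step excursions (walks from the origin back to the origin) equals binomial(2n,n)^2, and consequently the return probability equals 1 (the series sum over n of binomial(2n,n)^2 / 16^n diverges). -/

import Mathlib

/-- The step set of the square lattice `ℤ²`. -/
def sqSteps : Finset (ℤ × ℤ) := {(1, 0), (-1, 0), (0, 1), (0, -1)}

namespace SqAux

def sgn (b : Bool) : ℤ := if b then 1 else -1

def enc (s : ℤ × ℤ) : Bool × Bool := (decide (s.1 + s.2 = 1), decide (s.1 - s.2 = 1))

def dec : Bool × Bool → ℤ × ℤ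
  | (true, true) => (1, 0)
  | (false, false) => (-1, 0)
  | (true, false) => (0, 1)
  | (false, true) => (0, -1)

lemma dec_mem (p : Bool × Bool) : dec p ∈ sqSteps := by
  rcases p with ⟨a, b⟩ <;> cases a <;> cases b <;> decide

lemma mem_cases {s : ℤ × ℤ} (h : s ∈ sqSteps) :
    s = (1, 0) ∨ s = (-1, 0) ∨ s = (0, 1) ∨ s = (0, -1) := by
  simpa [sqSteps] using h

lemma dec_enc {s : ℤ × ℤ} (h : s ∈ sqSteps) : dec (enc s) = s := by
  rcases mem_cases h with h | h | h | h <;> subst h <;> decide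

lemma enc_dec (p : Bool × Bool) : enc (dec p) = p := by
  rcases p with ⟨a, b⟩ <;> cases a <;> cases b <;> decide

lemma step_fst_add_snd {s : ℤ × ℤ} (h : s ∈ sqSteps) :
    s.1 + s.2 = sgn (enc s).1 := by
  rcases mem_cases h with h | h | h | h <;> subst h <;> decide

lemma step_fst_sub_snd {s : ℤ × ℤ} (h : s ∈ sqSteps) :
    s.1 - s.2 = sgn (enc s).2 := by
  rcases mem_cases h with h | h | h | h <;> subst h <;> decide

/-- Steps as a pair of signs. -/
def stepEquiv : {x // x ∈ sqSteps} ≃ Bool × Bool where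
  toFun x := enc x.1
  invFun p := ⟨dec p, dec_mem p⟩
  left_inv x := Subtype.ext (dec_enc x.2)
  right_inv p := enc_dec p

/-- Bool-valued functions are finsets. -/
def boolFinsetEquiv (α : Type*) [Fintype α] [DecidableEq α] :
    (α → Bool) ≃ Finset α where
  toFun f := Finset.univ.filter (fun a => f a = true)
  invFun s := fun a => decide (a ∈ s)
  left_inv f := by ext a; simp
  right_inv s := by ext a; simp

lemma sum_sgn_eq (n : ℕ) (f : Fin (2 * n) → Bool) :
    (∑ i, sgn (f i)) =
      2 * ((Finset.univ.filter (fun i => f i = true)).card : ℤ) - 2 * n := by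
  have h : ∀ b, sgn b = 2 * (if b = true then (1 : ℤ) else 0) - 1 := by
    intro b; cases b <;> simp [sgn]
  rw [Finset.sum_congr rfl (fun i _ => h (f i)), Finset.sum_sub_distrib,
    ← Finset.mul_sum, Finset.sum_boole]
  simp [mul_comm]

lemma card_bool (n : ℕ) :
    Fintype.card {f : Fin (2 * n) → Bool // (∑ i, sgn (f i)) = 0} =
      Nat.choose (2 * n) n := by
  have e : {f : Fin (2 * n) → Bool // (∑ i, sgn (f i)) = 0} ≃
      {s : Finset (Fin (2 * n)) // s.card = n} := by
    refine Equiv.subtypeEquiv (boolFinsetEquiv (Fin (2 * n))) (fun f => ?_)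
    rw [sum_sgn_eq]
    constructor
    · intro h
      show (Finset.univ.filter (fun i => f i = true)).card = n
      omega
    · intro h
      have h' : (Finset.univ.filter (fun i => f i = true)).card = n := h
      omega
  rw [Fintype.card_congr e, Fintype.card_finset_len, Fintype.card_fin]

lemma excursion_count (n : ℕ) :
    Fintype.card {w : Fin (2 * n) → sqSteps // (∑ i, (w i : ℤ × ℤ)) = 0} =
      Nat.choose (2 * n) n ^ 2 := by
  have e1 : {w : Fin (2 * n) → sqSteps // (∑ i, (w i : ℤ × ℤ)) = 0} ≃
      {p : Fin (2 * n) → Bool × Bool //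
        (∑ i, sgn (p i).1) = 0 ∧ (∑ i, sgn (p i).2) = 0} := by
    refine Equiv.subtypeEquiv (Equiv.piCongrRight fun _ => stepEquiv) (fun w => ?_)
    have h1 : (∑ i, sgn (stepEquiv (w i)).1) = (∑ i, ((w i : ℤ × ℤ)).1) + ∑ i, ((w i : ℤ × ℤ)).2 := by
      rw [← Finset.sum_add_distrib]
      exact (Finset.sum_congr rfl fun i _ => (step_fst_add_snd (w i).2).symm)
    have h2 : (∑ i, sgn (stepEquiv (w i)).2) = (∑ i, ((w i : ℤ × ℤ)).1) - ∑ i, ((w i : ℤ × ℤ)).2 := by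
      rw [← Finset.sum_sub_distrib]
      exact (Finset.sum_congr rfl fun i _ => (step_fst_sub_snd (w i).2).symm)
    have hw : (∑ i, (w i : ℤ × ℤ)) = (∑ i, ((w i : ℤ × ℤ)).1, ∑ i, ((w i : ℤ × ℤ)).2) := by
      rw [Prod.ext_iff]
      exact ⟨Prod.fst_sum, Prod.snd_sum⟩
    rw [hw, Prod.mk_eq_zero]
    simp only [Equiv.piCongrRight_apply, Pi.map_apply]
    rw [h1, h2]
    omega
  have e2 : {p : Fin (2 * n) → Bool × Bool //
        (∑ i, sgn (p i).1) = 0 ∧ (∑ i, sgn (p i).2) = 0} ≃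
      {q : (Fin (2 * n) → Bool) × (Fin (2 * n) → Bool) //
        (∑ i, sgn (q.1 i)) = 0 ∧ (∑ i, sgn (q.2 i)) = 0} := by
    refine Equiv.subtypeEquiv (Equiv.arrowProdEquivProdArrow (Fin (2 * n)) (fun _ => Bool) (fun _ => Bool))
      (fun p => ?_)
    rfl
  have e3 := Equiv.subtypeProdEquivProd
    (p := fun f : Fin (2 * n) → Bool => (∑ i, sgn (f i)) = 0)
    (q := fun g : Fin (2 * n) → Bool => (∑ i, sgn (g i)) = 0)
  rw [Fintype.card_congr ((e1.trans e2).trans e3), Fintype.card_prod, card_bool, sq]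

lemma pow_16_le (n : ℕ) (hn : 1 ≤ n) : 16 ^ n ≤ 4 * n * Nat.centralBinom n ^ 2 := by
  induction n with
  | zero => omega
  | succ m ih =>
    rcases Nat.eq_or_lt_of_le hn with h | h
    · have : m = 0 := by omega
      subst this
      decide
    · have hm : 1 ≤ m := by omega
      have IH := ih hm
      set C := Nat.centralBinom m with hC
      have key : (m + 1) * Nat.centralBinom (m + 1) = 2 * (2 * m + 1) * C :=
        Nat.succ_mul_centralBinom_succ m
      have h3 : 16 ^ (m + 1) * (m + 1) ^ 2 ≤ 4 * (m + 1) * Nat.centralBinom (m + 1) ^ 2 * (m + 1) ^ 2 := by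
        have step1 : 16 ^ (m + 1) * (m + 1) ^ 2 ≤ 16 * (m + 1) ^ 2 * (4 * m * C ^ 2) := by
          calc 16 ^ (m + 1) * (m + 1) ^ 2 = 16 * (m + 1) ^ 2 * 16 ^ m := by ring
            _ ≤ 16 * (m + 1) ^ 2 * (4 * m * C ^ 2) := Nat.mul_le_mul_left _ IH
        have step2 : 16 * (m + 1) ^ 2 * (4 * m * C ^ 2) ≤ 4 * (m + 1) * (2 * (2 * m + 1) * C) ^ 2 := by
          nlinarith [sq_nonneg C]
        calc 16 ^ (m + 1) * (m + 1) ^ 2 ≤ 4 * (m + 1) * (2 * (2 * m + 1) * C) ^ 2 :=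
              le_trans step1 step2
          _ = 4 * (m + 1) * ((m + 1) * Nat.centralBinom (m + 1)) ^ 2 := by rw [key]
          _ = 4 * (m + 1) * Nat.centralBinom (m + 1) ^ 2 * (m + 1) ^ 2 := by ring
      exact Nat.le_of_mul_le_mul_right h3 (by positivity)

lemma not_summable :
    ¬ Summable (fun n : ℕ => (Nat.choose (2 * n) n : ℝ) ^ 2 / 16 ^ n) := by
  intro hs
  have h4 : Summable (fun n : ℕ => 4 * ((Nat.choose (2 * n) n : ℝ) ^ 2 / 16 ^ n)) :=
    hs.mul_left 4
  have : Summable (fun n : ℕ => 1 / (n : ℝ)) := by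
    refine Summable.of_nonneg_of_le (fun n => ?_) (fun n => ?_) h4
    · positivity
    · rcases Nat.eq_zero_or_pos n with h | h
      · subst h; simp
      · have hb := pow_16_le n h
        have hb' : (16 : ℝ) ^ n ≤ 4 * n * (Nat.choose (2 * n) n : ℝ) ^ 2 := by
          have : (Nat.centralBinom n : ℝ) = (Nat.choose (2 * n) n : ℝ) := by
            rw [Nat.centralBinom]
          calc (16 : ℝ) ^ n = ((16 ^ n : ℕ) : ℝ) := by push_cast; ring
            _ ≤ ((4 * n * Nat.centralBinom n ^ 2 : ℕ) : ℝ) := by exact_mod_cast hb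
            _ = 4 * n * (Nat.choose (2 * n) n : ℝ) ^ 2 := by push_cast [Nat.centralBinom]; ring
        have hn : (0 : ℝ) < n := by exact_mod_cast h
        have h16 : (0 : ℝ) < 16 ^ n := by positivity
        have heq : 4 * ((Nat.choose (2 * n) n : ℝ) ^ 2 / 16 ^ n) =
            (4 * (Nat.choose (2 * n) n : ℝ) ^ 2) / 16 ^ n := by ring
        rw [heq, div_le_div_iff₀ hn h16]
        nlinarith [hb']
  exact Real.not_summable_one_div_natCast this

end SqAux

/-- The number of `2n`-step excursions on the square lattice equals
`C(2n,n)²`, and consequently the return probability equals `1`: the series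
`∑ₙ C(2n,n)²/16ⁿ` of return probabilities diverges. -/
theorem square_lattice_excursions_and_recurrence :
    (∀ n : ℕ,
      Fintype.card {w : Fin (2 * n) → sqSteps // (∑ i, (w i : ℤ × ℤ)) = 0} =
        Nat.choose (2 * n) n ^ 2) ∧
    ¬ Summable (fun n : ℕ => (Nat.choose (2 * n) n : ℝ) ^ 2 / 16 ^ n) := by
  exact ⟨SqAux.excursion_count, SqAux.not_summable⟩
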